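/- Let h : ℝ → ℝ be three times differentiable with L-Lipschitz continuous third derivative for some L > 0. If h(0) ≤ A, h(−1/2) ≥ −B, h(−1) ≤ C, and h(−3) ≥ −D for some A, B, C, D ≥ 0, then for every θ ∈ [0, 1], h(θ) ≤ h(0) + 7A + 12.8B + 6C + 0.2D + L. -/

import Mathlib

private lemma cubic_aux_one_side (c : ℝ) (n : ℕ) (f : ℝ → ℝ) (hf : Differentiable ℝ f)
    (h0 : f 0 = 0) (hb : ∀ t, deriv f t ≤ c * |t| ^ n) {ξ : ℝ} (hξ : 0 ≤ ξ) :
    f ξ ≤ c * ξ ^ (n + 1) / (n + 1) := by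
  set φ : ℝ → ℝ := fun x => c * x ^ (n + 1) / (n + 1) - f x with hφ
  have hd : ∀ x : ℝ, HasDerivAt φ (c * x ^ n - deriv f x) x := by
    intro x
    have h1 : HasDerivAt (fun x : ℝ => c * x ^ (n + 1) / (n + 1))
        (c * ((n + 1 : ℕ) * x ^ n) / (n + 1)) x :=
      ((hasDerivAt_pow (n + 1) x).const_mul c).div_const (n + 1)
    have h2 : c * ((n + 1 : ℕ) * x ^ n) / (n + 1) = c * x ^ n := by
      have hne : ((n : ℝ) + 1) ≠ 0 := by positivity
      push_cast
      field_simp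
    rw [h2] at h1
    exact h1.sub (hf x).hasDerivAt
  have hmono : MonotoneOn φ (Set.Icc 0 ξ) := by
    apply monotoneOn_of_deriv_nonneg (convex_Icc 0 ξ)
    · exact fun x _ => ((hd x).differentiableAt.continuousAt).continuousWithinAt
    · exact fun x _ => ((hd x).differentiableAt).differentiableWithinAt
    · intro x hx
      rw [interior_Icc] at hx
      rw [(hd x).deriv]
      have hxpos : 0 < x := hx.1
      have hbx := hb x
      rw [abs_of_pos hxpos] at hbx
      linarith
  have h01 : φ 0 ≤ φ ξ := hmono (Set.left_mem_Icc.2 hξ) (Set.right_mem_Icc.2 hξ) hξ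
  simp only [hφ, h0, zero_pow (Nat.succ_ne_zero n), mul_zero, zero_div, sub_zero] at h01
  linarith

private lemma cubic_aux_step (c : ℝ) (n : ℕ) (f : ℝ → ℝ) (hf : Differentiable ℝ f)
    (h0 : f 0 = 0) (hb : ∀ t, |deriv f t| ≤ c * |t| ^ n) (ξ : ℝ) :
    |f ξ| ≤ c * |ξ| ^ (n + 1) / (n + 1) := by
  have key : ∀ (g : ℝ → ℝ), Differentiable ℝ g → g 0 = 0 →
      (∀ t, |deriv g t| ≤ c * |t| ^ n) → ∀ x : ℝ, 0 ≤ x →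
      |g x| ≤ c * x ^ (n + 1) / (n + 1) := by
    intro g hg hg0 hgb x hx
    have h1 : g x ≤ c * x ^ (n + 1) / (n + 1) :=
      cubic_aux_one_side c n g hg hg0 (fun t => (abs_le.1 (hgb t)).2) hx
    have h2 : (fun y => -g y) x ≤ c * x ^ (n + 1) / (n + 1) := by
      apply cubic_aux_one_side c n (fun y => -g y) hg.neg (by simp [hg0]) _ hx
      intro t
      rw [deriv.fun_neg]
      have hlow := (abs_le.1 (hgb t)).1
      linarith
    have h2' : -(g x) ≤ c * x ^ (n + 1) / (n + 1) := h2
    rw [abs_le]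
    constructor <;> linarith
  rcases le_or_gt 0 ξ with hξ | hξ
  · rw [abs_of_nonneg hξ]
    exact key f hf h0 hb ξ hξ
  · have hg : Differentiable ℝ (fun x => f (-x)) := hf.comp differentiable_neg
    have hgb : ∀ t : ℝ, |deriv (fun x => f (-x)) t| ≤ c * |t| ^ n := by
      intro t
      rw [deriv_comp_neg f t, abs_neg]
      simpa using hb (-t)
    have := key (fun x => f (-x)) hg (by simpa using h0) hgb (-ξ) (by linarith)
    simp only [neg_neg] at this
    rwa [abs_of_neg hξ]

private lemma cubic_aux_ranges {θ : ℝ} (hθ0 : 0 ≤ θ) (hθ1 : θ ≤ 1) :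
    (1 ≤ (θ + 1 / 2) * (θ + 1) * (θ + 3) * (2 / 3) ∧
      (θ + 1 / 2) * (θ + 1) * (θ + 3) * (2 / 3) ≤ 8) ∧
    (-64 / 5 ≤ θ * (θ + 1) * (θ + 3) * (-8 / 5) ∧ θ * (θ + 1) * (θ + 3) * (-8 / 5) ≤ 0) ∧
    (0 ≤ θ * (θ + 1 / 2) * (θ + 3) ∧ θ * (θ + 1 / 2) * (θ + 3) ≤ 6) ∧
    (-1 / 5 ≤ θ * (θ + 1 / 2) * (θ + 1) * (-1 / 15) ∧
      θ * (θ + 1 / 2) * (θ + 1) * (-1 / 15) ≤ 0) := by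
  have t1 : 0 ≤ (1 - θ) * θ := mul_nonneg (by linarith) hθ0
  have t2 : 0 ≤ (1 - θ) * θ * θ := mul_nonneg t1 hθ0
  have t3 : 0 ≤ (1 - θ) * (1 - θ) * θ := mul_nonneg (mul_nonneg (by linarith) (by linarith)) hθ0
  have t4 : 0 ≤ (1 - θ) * (1 - θ) := mul_nonneg (by linarith) (by linarith)
  have t5 : 0 ≤ θ * θ := mul_nonneg hθ0 hθ0
  have t6 : 0 ≤ θ * (θ + 1) * (θ + 3) := by positivity
  have t7 : 0 ≤ θ * (θ + 1 / 2) * (θ + 1) := by positivity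
  refine ⟨⟨by nlinarith, by nlinarith⟩, ⟨by nlinarith, by linarith⟩,
    ⟨by positivity, by nlinarith⟩, ⟨by nlinarith, by linarith⟩⟩

private lemma cubic_aux_final (a0 A B C D L pv ph p1 p3 l0 l1 l2 l3 hv : ℝ)
    (hid : pv = l0 * a0 + l1 * ph + l2 * p1 + l3 * p3)
    (Hth : hv ≤ pv + L / 24)
    (m0a : 0 ≤ (l0 - 1) * (A - a0))
    (m0b : 0 ≤ (8 - l0) * A)
    (m1a : 0 ≤ -l1 * (ph + B + L / 384))
    (m1b : 0 ≤ (64 / 5 + l1) * (B + L / 384))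
    (m2a : 0 ≤ l2 * (C + L / 24 - p1))
    (m2b : 0 ≤ (6 - l2) * (C + L / 24))
    (m3a : 0 ≤ -l3 * (p3 + D + 27 / 8 * L))
    (m3b : 0 ≤ (1 / 5 + l3) * (D + 27 / 8 * L)) :
    hv ≤ a0 + 7 * A + 64 / 5 * B + 6 * C + 1 / 5 * D + L := by
  linarith

set_option maxHeartbeats 1000000 in
/-- One-dimensional cubic-interpolation bound: four sampled values of h control h on
[0, 1] up to the Lipschitz constant of the third derivative. -/
theorem cubic_interpolation_value_bound
    (h : ℝ → ℝ) (L : ℝ) (hL : 0 < L)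
    (hd1 : Differentiable ℝ h)
    (hd2 : Differentiable ℝ (deriv h))
    (hd3 : Differentiable ℝ (deriv (deriv h)))
    (hlip : ∀ ξ₁ ξ₂ : ℝ,
      |deriv (deriv (deriv h)) ξ₁ - deriv (deriv (deriv h)) ξ₂| ≤ L * |ξ₁ - ξ₂|)
    (A B C D : ℝ) (hA : 0 ≤ A) (hB : 0 ≤ B) (hC : 0 ≤ C) (hD : 0 ≤ D)
    (h0 : h 0 ≤ A) (hhalf : h (-1 / 2) ≥ -B) (hone : h (-1) ≤ C)
    (hthree : h (-3) ≥ -D) :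
    ∀ θ ∈ Set.Icc (0 : ℝ) 1,
      h θ ≤ h 0 + 7 * A + 12.8 * B + 6 * C + 0.2 * D + L := by
  intro θ hθ
  obtain ⟨hθ0, hθ1⟩ := hθ
  set a0 := h 0 with ha0
  set a1 := deriv h 0 with ha1
  set a2 := deriv (deriv h) 0 with ha2
  set a3 := deriv (deriv (deriv h)) 0 with ha3
  have hLnn : (0 : ℝ) ≤ L := hL.le
  have hde0 : ∀ x : ℝ, HasDerivAt (fun x => h x - (a0 + a1 * x + a2 * x ^ 2 / 2 + a3 * x ^ 3 / 6))
      (deriv h x - (a1 + a2 * x + a3 * x ^ 2 / 2)) x := by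
    intro x
    have hp : HasDerivAt (fun x : ℝ => a0 + a1 * x + a2 * x ^ 2 / 2 + a3 * x ^ 3 / 6)
        (0 + a1 * 1 + a2 * ((2 : ℕ) * x ^ 1) / 2 + a3 * ((3 : ℕ) * x ^ 2) / 6) x :=
      (((hasDerivAt_const x a0).add ((hasDerivAt_id x).const_mul a1)).add
        (((hasDerivAt_pow 2 x).const_mul a2).div_const 2)).add
        (((hasDerivAt_pow 3 x).const_mul a3).div_const 6)
    have h2 : HasDerivAt (fun y => h y - (a0 + a1 * y + a2 * y ^ 2 / 2 + a3 * y ^ 3 / 6)) _ x := (hd1 x).hasDerivAt.sub hp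
    convert h2 using 1
    push_cast
    ring
  have hde1 : ∀ x : ℝ, HasDerivAt (fun x => deriv h x - (a1 + a2 * x + a3 * x ^ 2 / 2))
      (deriv (deriv h) x - (a2 + a3 * x)) x := by
    intro x
    have hp : HasDerivAt (fun x : ℝ => a1 + a2 * x + a3 * x ^ 2 / 2)
        (0 + a2 * 1 + a3 * ((2 : ℕ) * x ^ 1) / 2) x :=
      ((hasDerivAt_const x a1).add ((hasDerivAt_id x).const_mul a2)).add
        (((hasDerivAt_pow 2 x).const_mul a3).div_const 2)
    have h2 : HasDerivAt (fun y => deriv h y - (a1 + a2 * y + a3 * y ^ 2 / 2)) _ x := (hd2 x).hasDerivAt.sub hp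
    convert h2 using 1
    push_cast
    ring
  have hde2 : ∀ x : ℝ, HasDerivAt (fun x => deriv (deriv h) x - (a2 + a3 * x))
      (deriv (deriv (deriv h)) x - a3) x := by
    intro x
    have hp : HasDerivAt (fun x : ℝ => a2 + a3 * x) (0 + a3 * 1) x :=
      (hasDerivAt_const x a2).add ((hasDerivAt_id x).const_mul a3)
    have h2 : HasDerivAt (fun y => deriv (deriv h) y - (a2 + a3 * y)) _ x := (hd3 x).hasDerivAt.sub hp
    convert h2 using 1
    ring
  have hb3 : ∀ t : ℝ, |deriv (deriv (deriv h)) t - a3| ≤ L * |t| ^ 1 := by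
    intro t
    have := hlip t 0
    rw [← ha3] at this
    simpa using this
  have hb2 : ∀ ξ : ℝ, |deriv (deriv h) ξ - (a2 + a3 * ξ)| ≤ L / 2 * |ξ| ^ 2 := by
    intro ξ
    have hdiff : Differentiable ℝ (fun x => deriv (deriv h) x - (a2 + a3 * x)) :=
      fun x => (hde2 x).differentiableAt
    have h20 : (fun x : ℝ => deriv (deriv h) x - (a2 + a3 * x)) 0 = 0 := by
      simp [ha2]
    have hbd : ∀ t, |deriv (fun x => deriv (deriv h) x - (a2 + a3 * x)) t| ≤ L * |t| ^ 1 := by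
      intro t; rw [(hde2 t).deriv]; exact hb3 t
    have hres := cubic_aux_step L 1 _ hdiff h20 hbd ξ
    have heq : L * |ξ| ^ (1 + 1) / ((1 : ℕ) + 1) = L / 2 * |ξ| ^ 2 := by
      push_cast; ring
    rw [heq] at hres
    exact hres
  have hb1 : ∀ ξ : ℝ, |deriv h ξ - (a1 + a2 * ξ + a3 * ξ ^ 2 / 2)| ≤ L / 6 * |ξ| ^ 3 := by
    intro ξ
    have hdiff : Differentiable ℝ (fun x => deriv h x - (a1 + a2 * x + a3 * x ^ 2 / 2)) :=
      fun x => (hde1 x).differentiableAt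
    have h10 : (fun x : ℝ => deriv h x - (a1 + a2 * x + a3 * x ^ 2 / 2)) 0 = 0 := by
      simp [ha1]
    have hbd : ∀ t, |deriv (fun x => deriv h x - (a1 + a2 * x + a3 * x ^ 2 / 2)) t|
        ≤ (L / 2) * |t| ^ 2 := by
      intro t; rw [(hde1 t).deriv]; exact hb2 t
    have hres := cubic_aux_step (L / 2) 2 _ hdiff h10 hbd ξ
    have heq : L / 2 * |ξ| ^ (2 + 1) / ((2 : ℕ) + 1) = L / 6 * |ξ| ^ 3 := by
      push_cast; ring
    rw [heq] at hres
    exact hres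
  have hb0 : ∀ ξ : ℝ, |h ξ - (a0 + a1 * ξ + a2 * ξ ^ 2 / 2 + a3 * ξ ^ 3 / 6)|
      ≤ L / 24 * |ξ| ^ 4 := by
    intro ξ
    have hdiff : Differentiable ℝ (fun x => h x - (a0 + a1 * x + a2 * x ^ 2 / 2 + a3 * x ^ 3 / 6)) :=
      fun x => (hde0 x).differentiableAt
    have h00 : (fun x : ℝ => h x - (a0 + a1 * x + a2 * x ^ 2 / 2 + a3 * x ^ 3 / 6)) 0 = 0 := by
      simp [ha0]
    have hbd : ∀ t, |deriv (fun x => h x - (a0 + a1 * x + a2 * x ^ 2 / 2 + a3 * x ^ 3 / 6)) t|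
        ≤ (L / 6) * |t| ^ 3 := by
      intro t; rw [(hde0 t).deriv]; exact hb1 t
    have hres := cubic_aux_step (L / 6) 3 _ hdiff h00 hbd ξ
    have heq : L / 6 * |ξ| ^ (3 + 1) / ((3 : ℕ) + 1) = L / 24 * |ξ| ^ 4 := by
      push_cast; ring
    rw [heq] at hres
    exact hres
  have K : ∀ ξ : ℝ, -(L / 24 * ξ ^ 4) ≤ h ξ - (a0 + a1 * ξ + a2 * ξ ^ 2 / 2 + a3 * ξ ^ 3 / 6) ∧
      h ξ - (a0 + a1 * ξ + a2 * ξ ^ 2 / 2 + a3 * ξ ^ 3 / 6) ≤ L / 24 * ξ ^ 4 := by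
    intro ξ
    have hξ4 : |ξ| ^ 4 = ξ ^ 4 := by
      rw [← abs_pow, abs_of_nonneg (by positivity)]
    have := hb0 ξ
    rw [hξ4] at this
    exact abs_le.1 this
  obtain ⟨Kθ1, Kθ2⟩ := K θ
  obtain ⟨Kh1, Kh2⟩ := K (-1 / 2)
  obtain ⟨K11, K12⟩ := K (-1)
  obtain ⟨K31, K32⟩ := K (-3)
  set pv := a0 + a1 * θ + a2 * θ ^ 2 / 2 + a3 * θ ^ 3 / 6 with hpv
  set ph := a0 + a1 * (-1 / 2) + a2 * (-1 / 2) ^ 2 / 2 + a3 * (-1 / 2) ^ 3 / 6 with hph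
  set p1 := a0 + a1 * (-1) + a2 * (-1) ^ 2 / 2 + a3 * (-1) ^ 3 / 6 with hp1
  set p3 := a0 + a1 * (-3) + a2 * (-3) ^ 2 / 2 + a3 * (-3) ^ 3 / 6 with hp3
  set l0 : ℝ := (θ + 1 / 2) * (θ + 1) * (θ + 3) * (2 / 3) with hl0
  set l1 : ℝ := θ * (θ + 1) * (θ + 3) * (-8 / 5) with hl1
  set l2 : ℝ := θ * (θ + 1 / 2) * (θ + 3) with hl2
  set l3 : ℝ := θ * (θ + 1 / 2) * (θ + 1) * (-1 / 15) with hl3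
  have hid : pv = l0 * a0 + l1 * ph + l2 * p1 + l3 * p3 := by
    rw [hpv, hph, hp1, hp3, hl0, hl1, hl2, hl3]
    ring
  -- value bounds
  have Hh : ph ≥ -B - L / 384 := by linarith [Kh2, hhalf]
  have H1 : p1 ≤ C + L / 24 := by linarith [K11, hone]
  have H3 : p3 ≥ -D - 27 / 8 * L := by linarith [K32, hthree]
  have Hθ : h θ ≤ pv + L / 24 := by
    have hθ4 : θ ^ 4 ≤ 1 := by
      calc θ ^ 4 ≤ 1 ^ 4 := pow_le_pow_left₀ hθ0 hθ1 4
      _ = 1 := one_pow 4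
    have : L / 24 * θ ^ 4 ≤ L / 24 * 1 :=
      mul_le_mul_of_nonneg_left hθ4 (by positivity)
    linarith
  -- basis ranges on [0,1]
  obtain ⟨⟨hl0a, hl0b⟩, ⟨hl1a, hl1b⟩, ⟨hl2a, hl2b⟩, ⟨hl3a, hl3b⟩⟩ := cubic_aux_ranges hθ0 hθ1
  rw [← hl0] at hl0a hl0b
  rw [← hl1] at hl1a hl1b
  rw [← hl2] at hl2a hl2b
  rw [← hl3] at hl3a hl3b
  -- product bounds
  have m0a : 0 ≤ (l0 - 1) * (A - a0) := mul_nonneg (by linarith) (by linarith)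
  have m0b : 0 ≤ (8 - l0) * A := mul_nonneg (by linarith) hA
  have m1a : 0 ≤ (-l1) * (ph + B + L / 384) := mul_nonneg (by linarith) (by linarith)
  have m1b : 0 ≤ (64 / 5 + l1) * (B + L / 384) := mul_nonneg (by linarith) (by linarith)
  have m2a : 0 ≤ l2 * ((C + L / 24) - p1) := mul_nonneg hl2a (by linarith)
  have m2b : 0 ≤ (6 - l2) * (C + L / 24) := mul_nonneg (by linarith) (by linarith)
  have m3a : 0 ≤ (-l3) * (p3 + D + 27 / 8 * L) := mul_nonneg (by linarith) (by linarith)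
  have m3b : 0 ≤ (1 / 5 + l3) * (D + 27 / 8 * L) := mul_nonneg (by linarith) (by linarith)
  rw [show (12.8 : ℝ) = 64 / 5 by norm_num, show (0.2 : ℝ) = 1 / 5 by norm_num]
  exact cubic_aux_final a0 A B C D L pv ph p1 p3 l0 l1 l2 l3 (h θ) hid Hθ m0a m0b m1a m1b m2a m2b m3a m3b
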